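/- Let σ(y) = 1/(1 + e^{−y}) and let l < u ≤ 0 and d ∈ [l, u]. Then for every y ∈ [l, u]: (i) σ(y) ≤ σ(l) + ((σ(u) − σ(l))/(u − l))(y − l) (the chord through the endpoints is an upper bound), and (ii) σ(y) ≥ σ(d) + σ(d)(1 − σ(d))(y − d) (the tangent line at d is a lower bound). -/

import Mathlib

/-- The sigmoid (logistic) function `σ(y) = 1 / (1 + exp (-y))`. -/
noncomputable def sigmoid (y : ℝ) : ℝ := 1 / (1 + Real.exp (-y))

lemma sigmoid_pos (y : ℝ) : 0 < sigmoid y := by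
  unfold sigmoid
  positivity

lemma sigmoid_lt_one (y : ℝ) : sigmoid y < 1 := by
  unfold sigmoid
  rw [div_lt_one (by positivity)]
  linarith [Real.exp_pos (-y)]

lemma sigmoid_hasDerivAt (y : ℝ) :
    HasDerivAt sigmoid (sigmoid y * (1 - sigmoid y)) y := by
  have h1 : HasDerivAt (fun y : ℝ => 1 + Real.exp (-y)) (-Real.exp (-y)) y := by
    simpa using (((Real.hasDerivAt_exp (-y)).comp y ((hasDerivAt_id y).neg)).const_add 1)
  have hne : (1 : ℝ) + Real.exp (-y) ≠ 0 := by positivity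
  have this := h1.inv hne
  have hfun : (fun x : ℝ => 1 + Real.exp (-x))⁻¹ = sigmoid := by
    funext x; simp [sigmoid]
  have heq : -(-Real.exp (-y)) / (1 + Real.exp (-y)) ^ 2
      = sigmoid y * (1 - sigmoid y) := by
    unfold sigmoid; field_simp; ring
  rw [hfun, heq] at this
  exact this

lemma sigmoid_le_half {y : ℝ} (hy : y ≤ 0) : sigmoid y ≤ 1 / 2 := by
  unfold sigmoid
  have h1 : (1 : ℝ) ≤ Real.exp (-y) := Real.one_le_exp (by linarith)
  rw [div_le_div_iff₀ (by positivity) (by norm_num)]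
  linarith

lemma sigmoid_convexOn : ConvexOn ℝ (Set.Iic (0:ℝ)) sigmoid := by
  have hint : interior (Set.Iic (0:ℝ)) = Set.Iio 0 := interior_Iic
  refine convexOn_of_hasDerivWithinAt2_nonneg (convex_Iic 0)
    (f' := fun y => sigmoid y * (1 - sigmoid y))
    (f'' := fun y => sigmoid y * (1 - sigmoid y) * (1 - 2 * sigmoid y))
    (fun y hy => (sigmoid_hasDerivAt y).continuousAt.continuousWithinAt)
    (fun y _ => (sigmoid_hasDerivAt y).hasDerivWithinAt) (fun y _ => ?_) (fun y hy => ?_)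
  · have h := ((sigmoid_hasDerivAt y).mul ((sigmoid_hasDerivAt y).const_sub 1))
    have : HasDerivAt (fun z => sigmoid z * (1 - sigmoid z))
        (sigmoid y * (1 - sigmoid y) * (1 - 2 * sigmoid y)) y := by
      exact h.congr_deriv (by ring)
    exact this.hasDerivWithinAt
  · rw [hint] at hy
    have h1 := sigmoid_pos y
    have h2 := sigmoid_lt_one y
    have h3 := sigmoid_le_half (le_of_lt hy)
    show (0:ℝ) ≤ sigmoid y * (1 - sigmoid y) * (1 - 2 * sigmoid y)
    have := mul_nonneg (mul_nonneg h1.le (by linarith : (0:ℝ) ≤ 1 - sigmoid y))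
      (by linarith : (0:ℝ) ≤ 1 - 2 * sigmoid y)
    linarith

/-- CROWN linear bounds for a sigmoid neuron whose pre-activation interval `[l, u]` lies in
`(-∞, 0]`: the chord through the endpoints is an upper bound and the tangent line at any
`d ∈ [l, u]` is a lower bound. -/
theorem sigmoid_crown_bounds_nonpos (l u d : ℝ) (hu : u ≤ 0) (hlu : l < u)
    (hd : d ∈ Set.Icc l u) :
    ∀ y ∈ Set.Icc l u,
      sigmoid y ≤ sigmoid l + ((sigmoid u - sigmoid l) / (u - l)) * (y - l) ∧
      sigmoid d + sigmoid d * (1 - sigmoid d) * (y - d) ≤ sigmoid y := by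
  intro y hy
  have hconv := sigmoid_convexOn
  have hlS : l ∈ Set.Iic (0:ℝ) := by simp; linarith
  have huS : u ∈ Set.Iic (0:ℝ) := by simpa using hu
  have hyS : y ∈ Set.Iic (0:ℝ) := by simp; linarith [hy.2]
  have hdS : d ∈ Set.Iic (0:ℝ) := by simp; linarith [hd.2]
  have hul : (0:ℝ) < u - l := by linarith
  constructor
  · -- chord upper bound
    have ha : 0 ≤ (u - y) / (u - l) := div_nonneg (by linarith [hy.2]) hul.le
    have hb : 0 ≤ (y - l) / (u - l) := div_nonneg (by linarith [hy.1]) hul.le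
    have hab : (u - y) / (u - l) + (y - l) / (u - l) = 1 := by field_simp; ring
    have hne : u - l ≠ 0 := hul.ne'
    have key := hconv.2 hlS huS ha hb hab
    rw [smul_eq_mul, smul_eq_mul, smul_eq_mul, smul_eq_mul] at key
    have hcomb : (u - y) / (u - l) * l + (y - l) / (u - l) * u = y := by
      field_simp; ring
    rw [hcomb] at key
    have expand : (u - y) / (u - l) * sigmoid l + (y - l) / (u - l) * sigmoid u
        = sigmoid l + (sigmoid u - sigmoid l) / (u - l) * (y - l) := by
      field_simp; ring
    linarith [expand ▸ key]
  · -- tangent lower bound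
    rcases lt_trichotomy y d with h | h | h
    · have := hconv.slope_le_of_hasDerivAt hyS hdS h (sigmoid_hasDerivAt d)
      rw [slope_def_field] at this
      have hyd : d - y > 0 := by linarith
      rw [div_le_iff₀ hyd] at this
      nlinarith
    · subst h; simp
    · have := hconv.le_slope_of_hasDerivAt hdS hyS h (sigmoid_hasDerivAt d)
      rw [slope_def_field] at this
      have hyd : y - d > 0 := by linarith
      rw [le_div_iff₀ hyd] at this
      nlinarith
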